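/- Suppose D(t) ∈ ℝ^{n×n} is measurable locally bounded with D(t)e = 0 for all t ≥ 0, and its reduced matrix D̂(t) = S̃ D(t) S̃⁺ satisfies yᵀ D̂(t) y ≤ -α yᵀy for all y ∈ ℝ^{n-1}, t ≥ 0, for some α > 0. Then every solution of ẋ = D(t)x converges to the consensus subspace with exponential rate at least α: |S̃ x(t)| ≤ |S̃ x(0)| e^{-α t}. -/

import Mathlib

open Matrix

/-- The Moore–Penrose pseudo-inverse of a full-row-rank matrix: `S⁺ = Sᵀ(SSᵀ)⁻¹`. -/
noncomputable def moorePenrose {k n : ℕ} (S : Matrix (Fin k) (Fin n) ℝ) :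
    Matrix (Fin n) (Fin k) ℝ :=
  Sᵀ * (S * Sᵀ)⁻¹

/-- Euclidean norm of a vector given as a function. -/
noncomputable def euclEnorm {k : ℕ} (v : Fin k → ℝ) : ℝ := Real.sqrt (v ⬝ᵥ v)

lemma isUnit_of_full_rank {k : ℕ} (A : Matrix (Fin k) (Fin k) ℝ) (h : A.rank = k) :
    IsUnit A := by
  rw [← Matrix.mulVec_injective_iff_isUnit]
  have : Function.Injective A.mulVecLin := by
    rw [← LinearMap.ker_eq_bot]
    have h1 := A.mulVecLin.finrank_range_add_finrank_ker
    rw [show (Module.finrank ℝ (LinearMap.range A.mulVecLin)) = A.rank from rfl] at h1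
    simp only [h, Module.finrank_fin_fun] at h1
    have : Module.finrank ℝ (LinearMap.ker A.mulVecLin) = 0 := by omega
    exact Submodule.finrank_eq_zero.mp this
  exact this

lemma St_mul_moorePenrose {k n : ℕ} (S : Matrix (Fin k) (Fin n) ℝ)
    (h : S.rank = k) : S * moorePenrose S = 1 := by
  have hu : IsUnit (S * Sᵀ) :=
    isUnit_of_full_rank _ (by rw [Matrix.rank_self_mul_transpose, h])
  rw [moorePenrose, ← Matrix.mul_assoc,
    Matrix.mul_nonsing_inv _ ((Matrix.isUnit_iff_isUnit_det _).mp hu)]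

/-- If the measurable, locally bounded coupling matrix `D(t)` satisfies
`D(t)e = 0` and the reduced matrix `D̂(t) = S̃ D(t) S̃⁺` is uniformly dissipative
with parameter `α > 0`, then every solution of `ẋ = D(t)x` converges to the
consensus subspace with exponential rate at least `α`:
`|S̃x(t)| ≤ |S̃x(0)| e^{-αt}`. -/
theorem uniformly_dissipative_convergence {n : ℕ} (hn : 1 ≤ n)
    (D : ℝ → Matrix (Fin n) (Fin n) ℝ)
    (St : Matrix (Fin (n - 1)) (Fin n) ℝ)
    (hmeas : ∀ i j, Measurable fun t => D t i j)
    (hloc : ∀ T > (0 : ℝ), ∃ M : ℝ, ∀ t ∈ Set.Icc 0 T, ∀ i j, |D t i j| ≤ M)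
    (hDe : ∀ t ≥ (0 : ℝ), (D t).mulVec (fun _ => 1) = 0)
    (hrank : St.rank = n - 1)
    (hkerSt : ∀ v : Fin n → ℝ, St.mulVec v = 0 ↔ ∃ c : ℝ, v = fun _ => c)
    (α : ℝ) (hαpos : 0 < α)
    (hdiss : ∀ t ≥ (0 : ℝ), ∀ y : Fin (n - 1) → ℝ,
      y ⬝ᵥ (St * D t * moorePenrose St).mulVec y ≤ -α * (y ⬝ᵥ y)) :
    ∀ x : ℝ → (Fin n → ℝ), (∀ t, HasDerivAt x ((D t).mulVec (x t)) t) →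
      ∀ t ≥ (0 : ℝ),
        euclEnorm (St.mulVec (x t)) ≤ euclEnorm (St.mulVec (x 0)) * Real.exp (-α * t) := by
  intro x hx t ht
  have hSmp : St * moorePenrose St = 1 := St_mul_moorePenrose St hrank
  set y : ℝ → Fin (n - 1) → ℝ := fun t => St.mulVec (x t) with hy
  -- key identity: for s ≥ 0, St *ᵥ (D s *ᵥ x s) = (St * D s * moorePenrose St) *ᵥ y s
  have hkey : ∀ s ≥ (0 : ℝ),
      St.mulVec ((D s).mulVec (x s)) = (St * D s * moorePenrose St).mulVec (y s) := by
    intro s hs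
    have hv : St.mulVec (x s - (moorePenrose St).mulVec (y s)) = 0 := by
      rw [Matrix.mulVec_sub, Matrix.mulVec_mulVec, hSmp, Matrix.one_mulVec, sub_self]
    obtain ⟨c, hc⟩ := (hkerSt _).mp hv
    have hxs : x s = (moorePenrose St).mulVec (y s) + c • (fun _ => (1 : ℝ)) := by
      funext i
      have h2 := congr_fun hc i
      simp only [Pi.sub_apply] at h2
      simp only [Pi.add_apply, Pi.smul_apply, smul_eq_mul, mul_one]
      linarith
    rw [hxs, Matrix.mulVec_add, Matrix.mulVec_smul, hDe s hs, smul_zero, add_zero,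
      Matrix.mulVec_mulVec, Matrix.mulVec_mulVec]
  -- derivative of y components
  have hy' : ∀ s, ∀ i, HasDerivAt (fun u => y u i) (St.mulVec ((D s).mulVec (x s)) i) s := by
    intro s i
    have : ∀ j, HasDerivAt (fun u => x u j) ((D s).mulVec (x s) j) s :=
      fun j => (hasDerivAt_pi.mp (hx s)) j
    have hsum := HasDerivAt.fun_sum (u := Finset.univ)
      (fun j (_ : j ∈ Finset.univ) => ((this j).const_mul (St i j)))
    simpa [hy, Matrix.mulVec, dotProduct] using hsum
  -- g = |y|²
  set g : ℝ → ℝ := fun u => y u ⬝ᵥ y u with hg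
  have hg' : ∀ s, HasDerivAt g (2 * (y s ⬝ᵥ St.mulVec ((D s).mulVec (x s)))) s := by
    intro s
    have : HasDerivAt g (∑ i, (St.mulVec ((D s).mulVec (x s)) i * y s i
        + y s i * St.mulVec ((D s).mulVec (x s)) i)) s := by
      simpa [hg, dotProduct] using
        HasDerivAt.fun_sum (fun i _ => (hy' s i).mul (hy' s i))
    convert this using 1
    simp only [dotProduct, Finset.mul_sum]
    exact Finset.sum_congr rfl (fun i _ => by ring)
  -- h = g * exp(2αt) is antitone on [0,∞)
  set h : ℝ → ℝ := fun u => g u * Real.exp (2 * α * u) with hh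
  have hh' : ∀ s, HasDerivAt h (2 * (y s ⬝ᵥ St.mulVec ((D s).mulVec (x s))) * Real.exp (2 * α * s)
      + g s * (2 * α * Real.exp (2 * α * s))) s := by
    intro s
    have he : HasDerivAt (fun u => Real.exp (2 * α * u)) (2 * α * Real.exp (2 * α * s)) s := by
      simpa [mul_comm, mul_one] using (((hasDerivAt_id s).const_mul (2 * α)).exp)
    exact (hg' s).mul he
  have hanti : AntitoneOn h (Set.Ici (0 : ℝ)) := by
    apply antitoneOn_of_deriv_nonpos (convex_Ici 0)
    · exact fun s _ => ((hh' s).continuousAt).continuousWithinAt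
    · exact fun s _ => ((hh' s).differentiableAt).differentiableWithinAt
    · intro s hs
      rw [interior_Ici] at hs
      have hs0 : (0 : ℝ) ≤ s := le_of_lt hs
      rw [(hh' s).deriv]
      have h1 : y s ⬝ᵥ St.mulVec ((D s).mulVec (x s)) ≤ -α * (y s ⬝ᵥ y s) := by
        rw [hkey s hs0]; exact hdiss s hs0 (y s)
      have hexp : (0 : ℝ) < Real.exp (2 * α * s) := Real.exp_pos _
      have hgnn : 0 ≤ g s := Finset.sum_nonneg (fun i _ => mul_self_nonneg _)
      nlinarith [hexp, h1, hgnn]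
  -- conclude
  have hht : h t ≤ h 0 := hanti (Set.self_mem_Ici) ht ht
  have hgt : g t ≤ g 0 * Real.exp (-α * t) * Real.exp (-α * t) := by
    have he : Real.exp (2 * α * t) * (Real.exp (-α * t) * Real.exp (-α * t)) = 1 := by
      rw [← Real.exp_add, ← Real.exp_add, ← Real.exp_zero]; ring_nf
    have h0 : h 0 = g 0 := by simp [hh]
    rw [h0] at hht
    have := mul_le_mul_of_nonneg_right hht (le_of_lt (mul_pos (Real.exp_pos (-α*t)) (Real.exp_pos (-α*t))))
    calc g t = g t * (Real.exp (2 * α * t) * (Real.exp (-α * t) * Real.exp (-α * t))) := by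
              rw [he, mul_one]
      _ = h t * (Real.exp (-α * t) * Real.exp (-α * t)) := by rw [hh]; ring
      _ ≤ g 0 * (Real.exp (-α * t) * Real.exp (-α * t)) := this
      _ = g 0 * Real.exp (-α * t) * Real.exp (-α * t) := by ring
  have hg0 : 0 ≤ g 0 := Finset.sum_nonneg (fun i _ => mul_self_nonneg _)
  rw [euclEnorm, euclEnorm]
  calc Real.sqrt (y t ⬝ᵥ y t) ≤ Real.sqrt (g 0 * Real.exp (-α * t) * Real.exp (-α * t)) :=
        Real.sqrt_le_sqrt hgt
    _ = Real.sqrt (g 0) * Real.exp (-α * t) := by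
        rw [mul_assoc, Real.sqrt_mul hg0, Real.sqrt_mul_self (le_of_lt (Real.exp_pos _))]
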